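/- Let A ∈ ℝ^{N×K}, y ∈ ℝ^N, λ > 0, and let x* ∈ ℝ^K minimize the Lasso primal objective P(x|A) = ½‖Ax − y‖₂² + λ‖x‖₁ over ℝ^K. Define θ* = (y − Ax*)/λ. Then θ* ∈ Δ_A, D(θ*) = P(x*|A), and D(θ) ≤ D(θ*) for every θ ∈ Δ_A; i.e., θ* maximizes the dual objective over the dual feasible set (strong duality for the Lasso). -/

import Mathlib

open scoped ENNReal
open Matrix

/-- The ℓp-norm on ℝ^N for `p ∈ [1, ∞]` (given as `p : ℝ≥0∞`). -/
noncomputable def lpNorm {N : ℕ} (p : ℝ≥0∞) (v : Fin N → ℝ) : ℝ :=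
  if p = ∞ then ⨆ i, |v i| else (∑ i, |v i| ^ p.toReal) ^ (1 / p.toReal)

/-- The Lasso primal objective `P(x|A) = ½‖Ax − y‖₂² + λ‖x‖₁`. -/
noncomputable def lassoPrimal {N K : ℕ} (A : Matrix (Fin N) (Fin K) ℝ)
    (y : Fin N → ℝ) (lam : ℝ) (x : Fin K → ℝ) : ℝ :=
  (1 / 2) * (lpNorm 2 (A *ᵥ x - y)) ^ 2 + lam * lpNorm 1 x

/-- The Lasso dual objective `D(θ) = ½‖y‖₂² − (λ²/2)‖θ − y/λ‖₂²`. -/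
noncomputable def lassoDual {N : ℕ} (y : Fin N → ℝ) (lam : ℝ)
    (θ : Fin N → ℝ) : ℝ :=
  (1 / 2) * (lpNorm 2 y) ^ 2 - (lam ^ 2 / 2) * (lpNorm 2 (θ - lam⁻¹ • y)) ^ 2

lemma lpNorm_two_sq {N : ℕ} (v : Fin N → ℝ) : (lpNorm 2 v) ^ 2 = ∑ i, v i ^ 2 := by
  have ht : (2:ℝ≥0∞).toReal = 2 := by norm_num
  have hnn : (0:ℝ) ≤ ∑ i, |v i| ^ (2:ℝ) :=
    Finset.sum_nonneg fun i _ => Real.rpow_nonneg (abs_nonneg _) _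
  rw [lpNorm, if_neg (by norm_num), ht, ← Real.rpow_natCast _ 2, ← Real.rpow_mul hnn]
  norm_num

lemma lpNorm_one_eq {N : ℕ} (v : Fin N → ℝ) : lpNorm 1 v = ∑ i, |v i| := by
  rw [lpNorm, if_neg (by norm_num)]
  norm_num

lemma lpNorm_top {N : ℕ} (v : Fin N → ℝ) : lpNorm ∞ v = ⨆ i, |v i| := by
  rw [lpNorm, if_pos rfl]

lemma sum_mulVec_comm {N K : ℕ} (A : Matrix (Fin N) (Fin K) ℝ) (w : Fin N → ℝ)
    (x : Fin K → ℝ) :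
    ∑ i, w i * (A *ᵥ x) i = ∑ j, (Aᵀ *ᵥ w) j * x j := by
  simp only [Matrix.mulVec, dotProduct, Matrix.transpose_apply, Finset.mul_sum,
    Finset.sum_mul]
  rw [Finset.sum_comm]
  exact Finset.sum_congr rfl fun j _ => Finset.sum_congr rfl fun i _ => by ring

set_option maxHeartbeats 1000000 in
lemma lassoPrimal_eq {N K : ℕ} (A : Matrix (Fin N) (Fin K) ℝ) (y : Fin N → ℝ)
    (lam : ℝ) (x : Fin K → ℝ) :
    lassoPrimal A y lam x
      = (1/2) * ∑ i, ((A *ᵥ x) i - y i) ^ 2 + lam * ∑ j, |x j| := by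
  rw [lassoPrimal, lpNorm_two_sq, lpNorm_one_eq]
  simp [Pi.sub_apply]

lemma lassoDual_eq {N : ℕ} (y : Fin N → ℝ) (lam : ℝ) (θ : Fin N → ℝ) :
    lassoDual y lam θ
      = (1/2) * ∑ i, y i ^ 2 - (lam ^ 2 / 2) * ∑ i, (θ i - lam⁻¹ * y i) ^ 2 := by
  rw [lassoDual, lpNorm_two_sq, lpNorm_two_sq]
  simp [Pi.sub_apply, Pi.smul_apply, smul_eq_mul]

set_option maxHeartbeats 1000000 in
/-- Strong duality for the Lasso: if `x*` minimizes the primal objective and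
`θ* = (y − Ax*)/λ`, then `θ*` is dual feasible, `D(θ*) = P(x*|A)`, and `θ*`
maximizes the dual objective over the dual feasible set `Δ_A`. -/
theorem lasso_strong_duality (N K : ℕ) (A : Matrix (Fin N) (Fin K) ℝ)
    (y : Fin N → ℝ) (lam : ℝ) (hlam : 0 < lam) (xstar : Fin K → ℝ)
    (hmin : ∀ x : Fin K → ℝ, lassoPrimal A y lam xstar ≤ lassoPrimal A y lam x) :
    lpNorm ∞ (Aᵀ *ᵥ (lam⁻¹ • (y - A *ᵥ xstar))) ≤ 1 ∧
    lassoDual y lam (lam⁻¹ • (y - A *ᵥ xstar)) = lassoPrimal A y lam xstar ∧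
    ∀ θ : Fin N → ℝ, lpNorm ∞ (Aᵀ *ᵥ θ) ≤ 1 →
      lassoDual y lam θ ≤ lassoDual y lam (lam⁻¹ • (y - A *ᵥ xstar)) := by
  set a : Fin N → ℝ := A *ᵥ xstar with ha
  set L : ℝ := ∑ j, |xstar j| with hL
  set G : ℝ := ∑ i, (a i - y i) * a i with hG
  set S : ℝ := ∑ i, a i ^ 2 with hS
  have hSnn : 0 ≤ S := Finset.sum_nonneg fun i _ => sq_nonneg _
  clear_value a L G S
  -- Step A : optimality along scaling direction
  have hineqA : ∀ t : ℝ, -1 ≤ t →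
      0 ≤ t * G + t ^ 2 / 2 * S + lam * t * L := by
    intro t ht
    have h := hmin ((1 + t) • xstar)
    rw [lassoPrimal_eq, lassoPrimal_eq] at h
    have hAv : A *ᵥ ((1 + t) • xstar) = (1 + t) • a := by
      rw [Matrix.mulVec_smul, ha]
    rw [hAv] at h
    have h1 : ∑ j, |((1 + t) • xstar) j| = (1 + t) * L := by
      rw [hL, Finset.mul_sum]
      exact Finset.sum_congr rfl fun j _ => by
        rw [Pi.smul_apply, smul_eq_mul, abs_mul, abs_of_nonneg (by linarith : (0:ℝ) ≤ 1 + t)]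
    have h2 : ∑ i, (((1 + t) • a) i - y i) ^ 2
        = ∑ i, (a i - y i) ^ 2 + (2 * t) * G + t ^ 2 * S := by
      rw [hG, hS, Finset.mul_sum, Finset.mul_sum, ← Finset.sum_add_distrib,
        ← Finset.sum_add_distrib]
      exact Finset.sum_congr rfl fun i _ => by
        rw [Pi.smul_apply, smul_eq_mul]; ring
    rw [h1, h2, ← ha, ← hL] at h
    nlinarith [h]
  have hA : G + lam * L = 0 := by
    set M : ℝ := G + lam * L with hM
    set D : ℝ := S + |M| + 1 with hD
    have hD0 : 0 < D := by
      have := abs_nonneg M; rw [hD]; linarith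
    have ht1 : (-1 : ℝ) ≤ -M / D := by
      rw [neg_div, neg_le_neg_iff, div_le_one hD0]
      have := le_abs_self M
      have := abs_nonneg M
      rw [hD]; linarith
    have h := hineqA (-M / D) ht1
    have e : (-M / D) * G + (-M / D) ^ 2 / 2 * S + lam * (-M / D) * L
        = (-M / D) * M + (-M / D) ^ 2 / 2 * S := by rw [hM]; ring
    rw [e] at h
    have h2 : 0 ≤ -(M * M) * D + M ^ 2 / 2 * S := by
      have hD2 : (0:ℝ) < D ^ 2 := by positivity
      have := mul_le_mul_of_nonneg_left h (le_of_lt hD2)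
      calc (0:ℝ) = D ^ 2 * 0 := by ring
        _ ≤ D ^ 2 * ((-M / D) * M + (-M / D) ^ 2 / 2 * S) := this
        _ = -(M * M) * D + M ^ 2 / 2 * S := by field_simp
    have hM2 : M ^ 2 ≤ 0 := by
      rw [hD] at h2
      clear_value D M
      nlinarith [mul_nonneg hSnn (sq_nonneg M), mul_nonneg (abs_nonneg M) (sq_nonneg M)]
    have : M = 0 := by nlinarith [sq_nonneg M]
    rw [hM] at this; exact this
  -- Step B : coordinate-wise optimality gives dual feasibility
  have hB : ∀ j, |(Aᵀ *ᵥ (y - a)) j| ≤ lam := by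
    intro j
    set gj : ℝ := (Aᵀ *ᵥ (y - a)) j with hgj
    set Cj : ℝ := ∑ i, (A i j) ^ 2 with hCj
    have hCnn : 0 ≤ Cj := Finset.sum_nonneg fun i _ => sq_nonneg _
    have hgj' : gj = ∑ i, A i j * (y i - a i) := by
      rw [hgj]
      simp [Matrix.mulVec, dotProduct, Matrix.transpose_apply, Pi.sub_apply]
    clear_value gj Cj
    have hineqB : ∀ t : ℝ, t * gj ≤ t ^ 2 / 2 * Cj + lam * |t| := by
      intro t
      have h := hmin (xstar + t • (Pi.single j (1:ℝ) : Fin K → ℝ))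
      rw [lassoPrimal_eq, lassoPrimal_eq] at h
      have hAv : A *ᵥ (xstar + t • (Pi.single j (1:ℝ) : Fin K → ℝ)) = a + t • (fun i => A i j : Fin N → ℝ) := by
        rw [Matrix.mulVec_add, Matrix.mulVec_smul, Matrix.mulVec_single, ha]
        simp
        rfl
      rw [hAv] at h
      have h1 : ∑ i, |(xstar + t • (Pi.single j (1:ℝ) : Fin K → ℝ)) i| ≤ L + |t| := by
        have hb : ∀ i ∈ Finset.univ, |(xstar + t • (Pi.single j (1:ℝ) : Fin K → ℝ)) i|
            ≤ |xstar i| + |t| * (if i = j then 1 else 0) := by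
          intro i _
          rw [Pi.add_apply, Pi.smul_apply, smul_eq_mul, Pi.single_apply]
          by_cases hij : i = j
          · simp [hij]
            exact abs_add_le _ _
          · simp [hij]
        calc ∑ i, |(xstar + t • (Pi.single j (1:ℝ) : Fin K → ℝ)) i|
            ≤ ∑ i, (|xstar i| + |t| * (if i = j then 1 else 0)) :=
              Finset.sum_le_sum hb
          _ = L + |t| := by
              rw [Finset.sum_add_distrib, ← Finset.mul_sum, hL]
              simp
      have h2 : ∑ i, ((a + t • (fun i => A i j : Fin N → ℝ)) i - y i) ^ 2
          = ∑ i, (a i - y i) ^ 2 - (2 * t) * gj + t ^ 2 * Cj := by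
        rw [hgj', hCj, Finset.mul_sum, Finset.mul_sum, ← Finset.sum_sub_distrib,
          ← Finset.sum_add_distrib]
        exact Finset.sum_congr rfl fun i _ => by
          rw [Pi.add_apply, Pi.smul_apply, smul_eq_mul]; ring
      rw [h2, ← ha, ← hL] at h
      have h3 : lam * ∑ i, |(xstar + t • (Pi.single j (1:ℝ) : Fin K → ℝ)) i| ≤ lam * (L + |t|) :=
        mul_le_mul_of_nonneg_left h1 (le_of_lt hlam)
      nlinarith [h, h3]
    rw [abs_le]
    constructor
    · rw [← neg_le]
      apply le_of_forall_pos_le_add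
      intro ε hε
      have htpos : 0 < 2 * ε / (Cj + 1) := by positivity
      have hcl : (2 * ε / (Cj + 1)) * (Cj + 1) = 2 * ε := by
        field_simp
      have h := hineqB (-(2 * ε / (Cj + 1)))
      rw [abs_neg, abs_of_pos htpos] at h
      nlinarith [h, htpos, hcl, hCnn, mul_pos htpos hε]
    · apply le_of_forall_pos_le_add
      intro ε hε
      have htpos : 0 < 2 * ε / (Cj + 1) := by positivity
      have hcl : (2 * ε / (Cj + 1)) * (Cj + 1) = 2 * ε := by
        field_simp
      have h := hineqB (2 * ε / (Cj + 1))
      rw [abs_of_pos htpos] at h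
      nlinarith [h, htpos, hcl, hCnn, mul_pos htpos hε]
  -- feasibility of θ*
  have hsmul : Aᵀ *ᵥ (lam⁻¹ • (y - a)) = lam⁻¹ • (Aᵀ *ᵥ (y - a)) :=
    Matrix.mulVec_smul _ _ _
  have feas : lpNorm ∞ (Aᵀ *ᵥ (lam⁻¹ • (y - a))) ≤ 1 := by
    rw [hsmul, lpNorm_top]
    cases isEmpty_or_nonempty (Fin K) with
    | inl h => rw [Real.iSup_of_isEmpty]; norm_num
    | inr h =>
      apply ciSup_le
      intro j
      rw [Pi.smul_apply, smul_eq_mul, abs_mul, abs_of_pos (inv_pos.mpr hlam)]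
      have h1 : lam⁻¹ * |(Aᵀ *ᵥ (y - a)) j| ≤ lam⁻¹ * lam :=
        mul_le_mul_of_nonneg_left (hB j) (by positivity)
      rwa [inv_mul_cancel₀ (ne_of_gt hlam)] at h1
  -- useful identity : squared distance of θ* to y/λ
  have hstar : ∑ i, ((lam⁻¹ • (y - a)) i - lam⁻¹ * y i) ^ 2 = lam⁻¹ ^ 2 * S := by
    rw [hS, Finset.mul_sum]
    exact Finset.sum_congr rfl fun i _ => by
      rw [Pi.smul_apply, Pi.sub_apply, smul_eq_mul]; ring
  -- expansions relating primal and dual values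
  have hexp1 : ∑ i, (a i - y i) ^ 2
      = S - 2 * (∑ i, a i * y i) + ∑ i, y i ^ 2 := by
    rw [hS, Finset.mul_sum, ← Finset.sum_sub_distrib, ← Finset.sum_add_distrib]
    exact Finset.sum_congr rfl fun i _ => by ring
  have hGid : G = S - ∑ i, a i * y i := by
    rw [hG, hS, ← Finset.sum_sub_distrib]
    exact Finset.sum_congr rfl fun i _ => by ring
  have heq : lassoDual y lam (lam⁻¹ • (y - a)) = lassoPrimal A y lam xstar := by
    rw [lassoDual_eq, lassoPrimal_eq, hstar]
    have e1 : lam ^ 2 / 2 * (lam⁻¹ ^ 2 * S) = S / 2 := by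
      field_simp
    rw [e1, ← ha, ← hL, hexp1]
    linarith [hA, hGid]
  refine ⟨feas, heq, ?_⟩
  -- Step D : dual optimality
  intro θ hθ
  rw [lpNorm_top] at hθ
  have hfeas : ∀ j, |(Aᵀ *ᵥ θ) j| ≤ 1 := fun j =>
    le_trans (le_ciSup (Finite.bddAbove_range (fun i => |(Aᵀ *ᵥ θ) i|)) j) hθ
  have hθa : ∑ i, θ i * a i ≤ L := by
    rw [ha]
    calc ∑ i, θ i * (A *ᵥ xstar) i = ∑ j, (Aᵀ *ᵥ θ) j * xstar j :=
          sum_mulVec_comm A θ xstar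
      _ ≤ ∑ j, |xstar j| := by
          apply Finset.sum_le_sum
          intro j _
          calc (Aᵀ *ᵥ θ) j * xstar j ≤ |(Aᵀ *ᵥ θ) j * xstar j| := le_abs_self _
            _ = |(Aᵀ *ᵥ θ) j| * |xstar j| := abs_mul _ _
            _ ≤ 1 * |xstar j| := mul_le_mul_of_nonneg_right (hfeas j) (abs_nonneg _)
            _ = |xstar j| := one_mul _
      _ = L := hL.symm
  -- residual identity : ∑ (y-a) a = lam * L
  have hra : ∑ i, (y i - a i) * a i = lam * L := by
    have : ∑ i, (y i - a i) * a i = -G := by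
      rw [hG, ← Finset.sum_neg_distrib]
      exact Finset.sum_congr rfl fun i _ => by ring
    rw [this]; linarith [hA]
  -- key expansion
  have hE : ∑ i, (lam * θ i - y i) ^ 2
      = ∑ i, (lam * θ i - (y i - a i)) ^ 2
        - (2 * lam) * (∑ i, θ i * a i) + 2 * (∑ i, (y i - a i) * a i) + S := by
    have hz : ∀ i ∈ Finset.univ, (lam * θ i - y i) ^ 2
        = (lam * θ i - (y i - a i)) ^ 2 - (2 * lam) * (θ i * a i)
          + 2 * ((y i - a i) * a i) + a i ^ 2 := fun i _ => by ring
    rw [Finset.sum_congr rfl hz, Finset.sum_add_distrib, Finset.sum_add_distrib,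
      Finset.sum_sub_distrib, ← Finset.mul_sum, ← Finset.mul_sum, ← hS]
  have hwnn : 0 ≤ ∑ i, (lam * θ i - (y i - a i)) ^ 2 :=
    Finset.sum_nonneg fun i _ => sq_nonneg _
  have hSle : S ≤ ∑ i, (lam * θ i - y i) ^ 2 := by
    rw [hE, hra]
    have := mul_le_mul_of_nonneg_left hθa (le_of_lt hlam)
    nlinarith [this, hwnn]
  rw [lassoDual_eq, lassoDual_eq, hstar]
  have e1 : lam ^ 2 / 2 * (lam⁻¹ ^ 2 * S) = S / 2 := by field_simp
  have e2 : lam ^ 2 / 2 * ∑ i, (θ i - lam⁻¹ * y i) ^ 2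
      = (∑ i, (lam * θ i - y i) ^ 2) / 2 := by
    rw [Finset.mul_sum, Finset.sum_div]
    exact Finset.sum_congr rfl fun i _ => by
      have : lam * θ i - y i = lam * (θ i - lam⁻¹ * y i) := by
        field_simp
      rw [this]; ring
  rw [e1, e2]
  linarith [hSle]
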